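/- For all β₁, β₂ ∈ ℕ and every finite linearly ordered set P, every infinite nested sequence over ℕ^{β₁} × P × ℕ^{β₂} is good; equivalently, every bad nested sequence over ℕ^{β₁} × P × ℕ^{β₂} is finite. -/

import Mathlib

/-!
# Statement 8: every infinite nested sequence is good

Over `Y = ℕ^{β₁} × P × ℕ^{β₂}` (ordered lexicographically, `P` a finite linear order),
every infinite nested sequence `(y₀, h₀), (y₁, h₁), …` is good: there are indices
`k < m` with `y_k ≤_lex y_m` and `h_i ≥ h_k` for all `k < i ≤ m`.  Equivalently, every
bad nested sequence is finite.
-/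

namespace PNS

/-- Strict lexicographic order on `Fin n → ℕ`. -/
def VecLt {n : ℕ} (u v : Fin n → ℕ) : Prop :=
  ∃ i : Fin n, (∀ j : Fin n, j < i → u j = v j) ∧ u i < v i

/-- The ranking domain `ℕ^{β₁} × P × ℕ^{β₂}`. -/
abbrev Y (β₁ β₂ : ℕ) (P : Type) : Type := (Fin β₁ → ℕ) × P × (Fin β₂ → ℕ)

variable {β₁ β₂ : ℕ} {P : Type}

/-- Strict lexicographic order on `Y`. -/
def YLt [LT P] (y y' : Y β₁ β₂ P) : Prop :=
  VecLt y.1 y'.1 ∨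
    y.1 = y'.1 ∧ (y.2.1 < y'.2.1 ∨ y.2.1 = y'.2.1 ∧ VecLt y.2.2 y'.2.2)

/-- Lexicographic order on `Y`. -/
def YLe [LT P] (y y' : Y β₁ β₂ P) : Prop := y = y' ∨ YLt y y'

/-- Consecutive heights of a nested sequence change by at most one. -/
def HStep (h h' : ℕ) : Prop := h' = h + 1 ∨ h' = h ∨ h = h' + 1

end PNS

section aux

variable {β₁ β₂ : ℕ} {P : Type} [Fintype P] [LinearOrder P]

set_option linter.unusedSectionVars false

instance pnsFinWF (n : ℕ) : WellFoundedLT (Fin n) := Finite.to_wellFoundedLT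

/-- Embed `Y` into a lexicographic product type that Mathlib knows is a linear order
with well-founded `<`. -/
noncomputable def pnsEmb (y : PNS.Y β₁ β₂ P) :
    Lex ((Lex (Fin β₁ → ℕ)) × Lex (P × Lex (Fin β₂ → ℕ))) :=
  toLex (toLex y.1, toLex (y.2.1, toLex y.2.2))

lemma vecLt_iff {n : ℕ} (u v : Fin n → ℕ) : PNS.VecLt u v ↔ toLex u < toLex v := Iff.rfl

lemma pnsEmb_lt_iff (y y' : PNS.Y β₁ β₂ P) : pnsEmb y < pnsEmb y' ↔ PNS.YLt y y' := by
  unfold pnsEmb PNS.YLt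
  rw [Prod.Lex.lt_iff, Prod.Lex.lt_iff]
  simp [vecLt_iff, toLex_inj]

lemma pnsEmb_inj (y y' : PNS.Y β₁ β₂ P) (h : pnsEmb y = pnsEmb y') : y = y' := by
  unfold pnsEmb at h
  rw [toLex_inj, Prod.mk.injEq, toLex_inj, toLex_inj, Prod.mk.injEq, toLex_inj] at h
  obtain ⟨h1, h2, h3⟩ := h
  exact Prod.ext h1 (Prod.ext h2 h3)

lemma not_yle (y y' : PNS.Y β₁ β₂ P) (h : ¬ PNS.YLe y y') : PNS.YLt y' y := by
  rw [PNS.YLe, not_or] at h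
  rcases lt_trichotomy (pnsEmb y) (pnsEmb y') with hlt | heq | hgt
  · exact absurd ((pnsEmb_lt_iff _ _).1 hlt) h.2
  · exact absurd (pnsEmb_inj _ _ heq) h.1
  · exact (pnsEmb_lt_iff _ _).1 hgt

end aux

/-- **Every infinite nested sequence is good**: if `f : ℕ → Y × ℕ` satisfies the height
condition of nested sequences, then there are indices `k < m` with `y_k ≤_lex y_m` and
`h_i ≥ h_k` for all `k < i ≤ m`. -/
theorem infinite_nested_sequences_good
    (β₁ β₂ : ℕ) (P : Type) [Fintype P] [LinearOrder P]
    (f : ℕ → PNS.Y β₁ β₂ P × ℕ)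
    (hstep : ∀ k : ℕ, PNS.HStep (f k).2 (f (k + 1)).2) :
    ∃ k m : ℕ, k < m ∧ PNS.YLe (f k).1 (f m).1 ∧
      ∀ i : ℕ, k < i → i ≤ m → (f k).2 ≤ (f i).2 := by
  -- For each `n`, there is `k ≥ n` whose height is minimal among all heights from `n` on.
  have H : ∀ n : ℕ, ∃ k, n ≤ k ∧ ∀ i, k ≤ i → (f k).2 ≤ (f i).2 := by
    intro n
    classical
    have hq : ∃ h : ℕ, ∃ i, n ≤ i ∧ (f i).2 = h := ⟨(f n).2, n, le_rfl, rfl⟩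
    obtain ⟨k, hnk, hk⟩ := Nat.find_spec hq
    refine ⟨k, hnk, fun i hki => ?_⟩
    rw [hk]
    exact Nat.find_min' hq ⟨i, hnk.trans hki, rfl⟩
  choose c hc₁ hc₂ using H
  -- A strictly increasing sequence of such minimal indices.
  set g : ℕ → ℕ := fun n => Nat.rec (c 0) (fun _ k => c (k + 1)) n with hg
  have hgmin : ∀ n, ∀ i, g n ≤ i → (f (g n)).2 ≤ (f i).2 := by
    intro n
    cases n with
    | zero => exact hc₂ 0
    | succ m => exact hc₂ (g m + 1)
  have hgmono : ∀ n, g n < g (n + 1) := fun n => Nat.lt_of_succ_le (hc₁ (g n + 1))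
  -- Along `g`, some pair is nondecreasing in the lex order, by well-foundedness.
  have hexists : ∃ n, PNS.YLe (f (g n)).1 (f (g (n + 1))).1 := by
    by_contra hcon
    push_neg at hcon
    have hdesc : ∀ n, pnsEmb (f (g (n + 1))).1 < pnsEmb (f (g n)).1 := fun n =>
      (pnsEmb_lt_iff _ _).2 (not_yle _ _ (hcon n))
    exact (RelEmbedding.natGT (fun n => pnsEmb (f (g n)).1) hdesc).not_wellFounded
      (wellFounded_lt)
  obtain ⟨n, hn⟩ := hexists
  exact ⟨g n, g (n + 1), hgmono n, hn, fun i hki him =>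
    hgmin n i (le_of_lt hki)⟩
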